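/- For every positive even integer p and every integer q with gcd(p,q) = 1 and p + 2q > 0, one has ∑_{k=1}^{(p+2q)/2} (−1)^{⌊(2k−1)q/(p+2q)⌋} = ∑_{k=1}^{p/2} (−1)^{⌊(2k−1)q/p⌋} + 1, where ⌊·⌋ denotes the floor of the indicated rational number. (This is the arithmetic content, via Tuler's formula, of Proposition 3.2(3): lk(R_{p/q}) = lk(R_{(p+2q)/q}) − 1, obtained by adding two horizontal twists to a rational tangle.) -/

import Mathlib

private def eps (z : ℤ) : ℤ := (((-1 : ℤˣ) ^ z : ℤˣ) : ℤ)

private lemma eps_def (z : ℤ) : (((-1 : ℤˣ) ^ z : ℤˣ) : ℤ) = eps z := rfl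

private lemma eps_add_one (z : ℤ) : eps (z + 1) = -eps z := by
  unfold eps
  rw [zpow_add_one]
  push_cast
  ring

private lemma eps_even {z : ℤ} (h : Even z) : eps z = 1 := by
  unfold eps
  rw [Even.neg_one_zpow h]
  rfl

private lemma eps_odd {z : ℤ} (h : Odd z) : eps z = -1 := by
  obtain ⟨m, hm⟩ := h
  have : z = 2 * m + 1 := by omega
  rw [this, eps_add_one, eps_even ⟨m, by ring⟩]

private lemma eps_neg_sub_one (z : ℤ) : eps (-z - 1) = -eps z := by
  rcases Int.even_or_odd z with h | h
  · rw [eps_even h, eps_odd (by obtain ⟨m, hm⟩ := h; exact ⟨-m - 1, by omega⟩)]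
  · rw [eps_odd h, eps_even (by obtain ⟨m, hm⟩ := h; exact ⟨-m - 1, by omega⟩)]
    rfl

private lemma Ioc_insert (a b : ℤ) (h : a ≤ b) :
    Finset.Ioc a (b + 1) = insert (b + 1) (Finset.Ioc a b) := by
  ext x
  simp only [Finset.mem_Ioc, Finset.mem_insert]
  omega

private lemma sum_Ioc_succ_top (a b : ℤ) (h : a ≤ b) (f : ℤ → ℤ) :
    ∑ x ∈ Finset.Ioc a (b + 1), f x = (∑ x ∈ Finset.Ioc a b, f x) + f (b + 1) := by
  rw [Ioc_insert a b h, Finset.sum_insert (by simp)]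
  ring

/-- `2 * ∑_{0 < m ≤ a} eps (m-1) = 1 - eps a` for `a ≥ 0`. -/
private lemma two_mul_sum_eps : ∀ a : ℤ, 0 ≤ a →
    2 * ∑ m ∈ Finset.Ioc (0 : ℤ) a, eps (m - 1) = 1 - eps a := by
  refine Int.le_induction ?_ ?_
  · rw [Finset.Ioc_self, Finset.sum_empty, eps_even Even.zero]
    ring
  · intro n hn ih
    rw [sum_Ioc_succ_top 0 n hn, mul_add, ih, eps_add_one]
    have h : n + 1 - 1 = n := by ring
    rw [h]
    ring

/-- eps expansion: for `0 ≤ a ≤ N`,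
`eps a = 1 - 2 * ∑_{0 < m ≤ N} (if m ≤ a then eps (m-1) else 0)`. -/
private lemma eps_expand (a N : ℤ) (h0 : 0 ≤ a) (hN : a ≤ N) :
    eps a = 1 - 2 * ∑ m ∈ Finset.Ioc (0 : ℤ) N,
      (if m ≤ a then eps (m - 1) else 0) := by
  have hfil : ∑ m ∈ Finset.Ioc (0 : ℤ) N, (if m ≤ a then eps (m - 1) else 0)
      = ∑ m ∈ Finset.Ioc (0 : ℤ) a, eps (m - 1) := by
    rw [← Finset.sum_filter]
    congr 1
    ext x
    simp only [Finset.mem_filter, Finset.mem_Ioc]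
    omega
  rw [hfil]
  have := two_mul_sum_eps a h0
  omega

/-- Alternating weighted sum: `∑_{0 < m ≤ 2n} eps (m-1) * (2n + 1 - m) = n` for `n ≥ 0`. -/
private lemma alt_weighted_sum : ∀ n : ℤ, 0 ≤ n →
    ∑ m ∈ Finset.Ioc (0 : ℤ) (2 * n), eps (m - 1) * (2 * n + 1 - m) = n := by
  refine Int.le_induction ?_ ?_
  · norm_num
  · intro n hn ih
    have hb : Finset.Ioc (0 : ℤ) (2 * (n + 1)) = Finset.Ioc 0 ((2 * n + 1) + 1) := by
      ring_nf
    rw [hb, sum_Ioc_succ_top 0 (2 * n + 1) (by omega),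
      sum_Ioc_succ_top 0 (2 * n) (by omega)]
    have hsplit : ∑ m ∈ Finset.Ioc (0 : ℤ) (2 * n), eps (m - 1) * (2 * (n + 1) + 1 - m)
        = (∑ m ∈ Finset.Ioc (0 : ℤ) (2 * n), eps (m - 1) * (2 * n + 1 - m))
          + 2 * ∑ m ∈ Finset.Ioc (0 : ℤ) (2 * n), eps (m - 1) := by
      rw [Finset.mul_sum, ← Finset.sum_add_distrib]
      exact Finset.sum_congr rfl (fun m _ => by ring)
    rw [hsplit, ih, two_mul_sum_eps (2 * n) (by omega),
      eps_even (z := 2 * n) ⟨n, by ring⟩]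
    have e1 : eps (2 * n + 1 - 1) = 1 := eps_even ⟨n, by ring⟩
    have e2 : eps (2 * n + 1 + 1 - 1) = -1 := eps_odd ⟨n, by ring⟩
    rw [e1, e2]
    ring

/-- floor comparison: for `d > 0`, `m ≤ ⌊(n : ℚ)/d⌋ ↔ m * d ≤ n`. -/
private lemma le_floor_div_iff (m n d : ℤ) (hd : 0 < d) :
    m ≤ ⌊((n : ℤ) : ℚ) / ((d : ℤ) : ℚ)⌋ ↔ m * d ≤ n := by
  rw [Int.le_floor, le_div_iff₀ (by exact_mod_cast hd : (0:ℚ) < ((d:ℤ):ℚ))]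
  constructor <;> intro h <;> exact_mod_cast h


private lemma floor_neg_of_ne (x : ℚ) (h : ∀ z : ℤ, x ≠ (z : ℚ)) : ⌊-x⌋ = -⌊x⌋ - 1 := by
  have h1 : (⌊x⌋ : ℚ) ≤ x := Int.floor_le x
  have h2 : x < ⌊x⌋ + 1 := Int.lt_floor_add_one x
  have h3 : (⌊x⌋ : ℚ) ≠ x := fun he => h ⌊x⌋ he.symm
  have h1' : (⌊x⌋ : ℚ) < x := lt_of_le_of_ne h1 h3
  rw [Int.floor_eq_iff]
  constructor <;> push_cast <;> linarith

/-- Negating `q` negates every term of the Tuler sum (denominator even, coprime). -/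
private lemma sum_neg (X r : ℤ) (hX : 0 < X) (hXe : Even X) (hco : IsCoprime X r) :
    ∑ k ∈ Finset.Ioc (0 : ℤ) (X / 2), eps ⌊(((2 * k - 1) * (-r) : ℤ) : ℚ) / ((X : ℤ) : ℚ)⌋
    = - ∑ k ∈ Finset.Ioc (0 : ℤ) (X / 2), eps ⌊(((2 * k - 1) * r : ℤ) : ℚ) / ((X : ℤ) : ℚ)⌋ := by
  rw [← Finset.sum_neg_distrib]
  apply Finset.sum_congr rfl
  intro k hk
  have hXQ : ((X : ℤ) : ℚ) ≠ 0 := by exact_mod_cast hX.ne'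
  have hnint : ∀ z : ℤ, (((2 * k - 1) * r : ℤ) : ℚ) / ((X : ℤ) : ℚ) ≠ (z : ℚ) := by
    intro z hz
    have hzX : (2 * k - 1) * r = z * X := by
      have : (((2 * k - 1) * r : ℤ) : ℚ) = (z : ℚ) * ((X : ℤ) : ℚ) := by
        field_simp at hz
        rw [mul_comm (z : ℚ)]
        exact_mod_cast hz
      exact_mod_cast this
    have hdvd : X ∣ (2 * k - 1) * r := ⟨z, by linarith [hzX]⟩
    have h2k : X ∣ 2 * k - 1 := hco.dvd_of_dvd_mul_right hdvd
    obtain ⟨c, hc⟩ := h2k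
    obtain ⟨b, hb⟩ := hXe
    have : 2 * k - 1 = 2 * (b * c) := by rw [hc, hb]; ring
    omega
  have hneg : (((2 * k - 1) * (-r) : ℤ) : ℚ) / ((X : ℤ) : ℚ)
      = -((((2 * k - 1) * r : ℤ) : ℚ) / ((X : ℤ) : ℚ)) := by
    push_cast
    ring
  rw [hneg, floor_neg_of_ne _ hnint,
    show -⌊(((2 * k - 1) * r : ℤ) : ℚ) / ((X : ℤ) : ℚ)⌋ - 1
      = -(⌊(((2 * k - 1) * r : ℤ) : ℚ) / ((X : ℤ) : ℚ)⌋) - 1 from rfl,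
    eps_neg_sub_one]

/-- Main case: `q > 0`. -/
private lemma main_pos (p q : ℤ) (hp : 0 < p) (hpe : Even p) (hq : 0 < q) (hqo : Odd q) :
    ∑ k ∈ Finset.Ioc (0 : ℤ) ((p + 2 * q) / 2),
        eps ⌊(((2 * k - 1) * q : ℤ) : ℚ) / (((p + 2 * q) : ℤ) : ℚ)⌋
      = (∑ k ∈ Finset.Ioc (0 : ℤ) (p / 2),
        eps ⌊(((2 * k - 1) * q : ℤ) : ℚ) / ((p : ℤ) : ℚ)⌋) + 1 := by
  obtain ⟨a, ha⟩ := hpe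
  have ha1 : 1 ≤ a := by omega
  have hd1 : p / 2 = a := by omega
  have hd2 : (p + 2 * q) / 2 = a + q := by omega
  rw [hd1, hd2]
  -- expansion of each term
  have expand : ∀ X : ℤ, 0 < X → ∀ k : ℤ, 0 < k → 2 * k - 1 < X →
      eps ⌊(((2 * k - 1) * q : ℤ) : ℚ) / ((X : ℤ) : ℚ)⌋
      = 1 - 2 * ∑ m ∈ Finset.Ioc (0 : ℤ) (q - 1),
          (if m * X ≤ (2 * k - 1) * q then eps (m - 1) else 0) := by
    intro X hX k hk hkX
    have hnum : (0 : ℤ) * X ≤ (2 * k - 1) * q := by nlinarith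
    have h0 : 0 ≤ ⌊(((2 * k - 1) * q : ℤ) : ℚ) / ((X : ℤ) : ℚ)⌋ :=
      (le_floor_div_iff 0 _ X hX).mpr hnum
    have hN : ⌊(((2 * k - 1) * q : ℤ) : ℚ) / ((X : ℤ) : ℚ)⌋ ≤ q - 1 := by
      by_contra hcon
      push_neg at hcon
      have := (le_floor_div_iff q ((2 * k - 1) * q) X hX).mp (by omega)
      nlinarith
    rw [eps_expand _ (q - 1) h0 hN]
    congr 1
    congr 1
    apply Finset.sum_congr rfl
    intro m _
    simp only [le_floor_div_iff m _ X hX]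
  -- rewrite both sums
  have reduce : ∀ b : ℤ, 0 < b → ∀ X : ℤ, 0 < X → 2 * b ≤ X →
      ∑ k ∈ Finset.Ioc (0 : ℤ) b, eps ⌊(((2 * k - 1) * q : ℤ) : ℚ) / ((X : ℤ) : ℚ)⌋
      = b - 2 * ∑ m ∈ Finset.Ioc (0 : ℤ) (q - 1), ∑ k ∈ Finset.Ioc (0 : ℤ) b,
          (if m * X ≤ (2 * k - 1) * q then eps (m - 1) else 0) := by
    intro b hb X hX hbX
    have h1 : ∑ k ∈ Finset.Ioc (0 : ℤ) b, eps ⌊(((2 * k - 1) * q : ℤ) : ℚ) / ((X : ℤ) : ℚ)⌋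
        = ∑ k ∈ Finset.Ioc (0 : ℤ) b, (1 - 2 * ∑ m ∈ Finset.Ioc (0 : ℤ) (q - 1),
            (if m * X ≤ (2 * k - 1) * q then eps (m - 1) else 0)) :=
      Finset.sum_congr rfl (fun k hk => by
        rw [Finset.mem_Ioc] at hk
        exact expand X hX k hk.1 (by omega))
    rw [h1, Finset.sum_sub_distrib, Finset.sum_const, ← Finset.mul_sum, Finset.sum_comm]
    congr 1
    rw [nsmul_eq_mul, mul_one]
    have hcard := Int.card_Ioc_of_le 0 b (by omega)
    omega
  -- the key count comparison, for each m
  have key : ∀ m ∈ Finset.Ioc (0 : ℤ) (q - 1),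
      (∑ k ∈ Finset.Ioc (0 : ℤ) (a + q),
        (if m * (p + 2 * q) ≤ (2 * k - 1) * q then eps (m - 1) else 0))
      = (∑ k ∈ Finset.Ioc (0 : ℤ) a,
        (if m * p ≤ (2 * k - 1) * q then eps (m - 1) else 0)) + eps (m - 1) * (q - m) := by
    intro m hm
    rw [Finset.mem_Ioc] at hm
    -- change the condition
    have hcongr : ∀ k : ℤ,
        (m * (p + 2 * q) ≤ (2 * k - 1) * q) ↔ (m * p ≤ (2 * (k - m) - 1) * q) := by
      intro k
      have e1 : (2 * (k - m) - 1) * q = (2 * k - 1) * q - 2 * (m * q) := by ring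
      have e2 : m * (p + 2 * q) = m * p + 2 * (m * q) := by ring
      constructor <;> intro h <;> linarith
    have hstep : ∑ k ∈ Finset.Ioc (0 : ℤ) (a + q),
        (if m * (p + 2 * q) ≤ (2 * k - 1) * q then eps (m - 1) else 0)
        = ∑ k ∈ Finset.Ioc (0 : ℤ) (a + q),
        (if m * p ≤ (2 * (k - m) - 1) * q then eps (m - 1) else 0) :=
      Finset.sum_congr rfl (fun k _ => by rw [if_congr (hcongr k) rfl rfl])
    rw [hstep]
    -- reindex by k ↦ k - m
    have hmap : Finset.Ioc (0 : ℤ) (a + q)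
        = (Finset.Ioc (-m) (a + q - m)).map (addRightEmbedding m) := by
      rw [Finset.map_add_right_Ioc]
      congr 1 <;> ring
    rw [hmap, Finset.sum_map]
    simp only [addRightEmbedding_apply, add_sub_cancel_right]
    -- split the interval
    have hsp1 : Finset.Ioc (-m : ℤ) (a + q - m)
        = Finset.Ioc (-m : ℤ) 0 ∪ Finset.Ioc (0 : ℤ) (a + q - m) :=
      (Finset.Ioc_union_Ioc_eq_Ioc (by omega) (by omega)).symm
    have hdj1 : Disjoint (Finset.Ioc (-m : ℤ) 0) (Finset.Ioc (0 : ℤ) (a + q - m)) := by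
      rw [Finset.disjoint_left]
      intro x hx hx'
      rw [Finset.mem_Ioc] at hx hx'
      omega
    have hsp2 : Finset.Ioc (0 : ℤ) (a + q - m)
        = Finset.Ioc (0 : ℤ) a ∪ Finset.Ioc a (a + q - m) :=
      (Finset.Ioc_union_Ioc_eq_Ioc (by omega) (by omega)).symm
    have hdj2 : Disjoint (Finset.Ioc (0 : ℤ) a) (Finset.Ioc a (a + q - m)) := by
      rw [Finset.disjoint_left]
      intro x hx hx'
      rw [Finset.mem_Ioc] at hx hx'
      omega
    rw [hsp1, Finset.sum_union hdj1, hsp2, Finset.sum_union hdj2]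
    have hzero : ∑ j ∈ Finset.Ioc (-m : ℤ) 0,
        (if m * p ≤ (2 * j - 1) * q then eps (m - 1) else 0) = 0 := by
      apply Finset.sum_eq_zero
      intro j hj
      rw [Finset.mem_Ioc] at hj
      rw [if_neg]
      intro hcon
      nlinarith
    have hconst : ∑ j ∈ Finset.Ioc a (a + q - m),
        (if m * p ≤ (2 * j - 1) * q then eps (m - 1) else 0) = eps (m - 1) * (q - m) := by
      have hc : ∑ j ∈ Finset.Ioc a (a + q - m),
          (if m * p ≤ (2 * j - 1) * q then eps (m - 1) else 0)
          = ∑ _j ∈ Finset.Ioc a (a + q - m), eps (m - 1) :=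
        Finset.sum_congr rfl (fun j hj => by
          rw [Finset.mem_Ioc] at hj
          rw [if_pos (by nlinarith)])
      rw [hc, Finset.sum_const, nsmul_eq_mul, mul_comm]
      congr 1
      have : (a + q - m) - a = q - m := by ring
      calc ((Finset.Ioc a (a + q - m)).card : ℤ) = (a + q - m) - a :=
            Int.card_Ioc_of_le a (a + q - m) (by omega)
        _ = q - m := by ring
    rw [hzero, hconst]
    ring
  -- combine
  obtain ⟨n, hn⟩ := hqo
  have hwt : ∑ m ∈ Finset.Ioc (0 : ℤ) (q - 1), eps (m - 1) * (q - m) = n := by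
    have h := alt_weighted_sum n (by omega)
    have hb : q - 1 = 2 * n := by omega
    rw [hb]
    have hc : ∑ m ∈ Finset.Ioc (0 : ℤ) (2 * n), eps (m - 1) * (q - m)
        = ∑ m ∈ Finset.Ioc (0 : ℤ) (2 * n), eps (m - 1) * (2 * n + 1 - m) :=
      Finset.sum_congr rfl (fun m _ => by
        rw [show q - m = 2 * n + 1 - m from by omega])
    rw [hc]
    exact h
  have hkey : ∑ m ∈ Finset.Ioc (0 : ℤ) (q - 1), ∑ k ∈ Finset.Ioc (0 : ℤ) (a + q),
        (if m * (p + 2 * q) ≤ (2 * k - 1) * q then eps (m - 1) else 0)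
      = ∑ m ∈ Finset.Ioc (0 : ℤ) (q - 1), ((∑ k ∈ Finset.Ioc (0 : ℤ) a,
        (if m * p ≤ (2 * k - 1) * q then eps (m - 1) else 0)) + eps (m - 1) * (q - m)) :=
    Finset.sum_congr rfl key
  rw [reduce (a + q) (by omega) (p + 2 * q) (by omega) (by omega),
    reduce a (by omega) p (by omega) (by omega),
    hkey, Finset.sum_add_distrib, hwt]
  omega

theorem tuler_sum_add_two_q (p q : ℤ) (hp : 0 < p) (hpe : Even p)
    (hpq : Int.gcd p q = 1) (hpos : 0 < p + 2 * q) :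
    ∑ k ∈ Finset.Icc (1 : ℤ) ((p + 2 * q) / 2),
        (((-1 : ℤˣ) ^ ⌊(((2 * k - 1) * q : ℤ) : ℚ) / (((p + 2 * q) : ℤ) : ℚ)⌋ : ℤˣ) : ℤ)
      = (∑ k ∈ Finset.Icc (1 : ℤ) (p / 2),
        (((-1 : ℤˣ) ^ ⌊(((2 * k - 1) * q : ℤ) : ℚ) / ((p : ℤ) : ℚ)⌋ : ℤˣ) : ℤ)) + 1 := by
  have hIcc : ∀ x : ℤ, Finset.Icc (1 : ℤ) x = Finset.Ioc 0 x := by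
    intro x
    ext y
    simp only [Finset.mem_Icc, Finset.mem_Ioc]
    omega
  have hq0 : q ≠ 0 := by
    rintro rfl
    rw [Int.gcd_zero_right] at hpq
    obtain ⟨a, ha⟩ := hpe
    omega
  have hqo : Odd q := by
    rcases Int.even_or_odd q with he | ho
    · exfalso
      have h2 : (2 : ℤ) ∣ (Int.gcd p q : ℤ) :=
        by exact_mod_cast (Int.dvd_gcd (a := p) (b := q) (c := 2) (by obtain ⟨a, ha⟩ := hpe; exact ⟨a, by omega⟩)
          (by obtain ⟨b, hb⟩ := he; exact ⟨b, by omega⟩))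
      rw [hpq] at h2
      norm_num at h2
    · exact ho
  rw [hIcc, hIcc]
  simp only [eps_def]
  rcases lt_or_gt_of_ne hq0 with hneg | hposq
  · have hco : IsCoprime p q := Int.isCoprime_iff_gcd_eq_one.mpr hpq
    have hcoP : IsCoprime (p + 2 * q) q := by
      obtain ⟨u, v, huv⟩ := hco
      exact ⟨u, v - 2 * u, by linear_combination huv⟩
    have hPe : Even (p + 2 * q) := by
      obtain ⟨a, ha⟩ := hpe
      exact ⟨a + q, by omega⟩
    have h1 := main_pos (p + 2 * q) (-q) hpos hPe (by omega) hqo.neg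
    rw [show p + 2 * q + 2 * -q = p from by ring] at h1
    rw [sum_neg p q hp hpe hco, sum_neg (p + 2 * q) q hpos hPe hcoP] at h1
    omega
  · exact main_pos p q hp hpe hposq hqo
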